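/- Let s > 1 and let X and Y be independent random variables, each with the Zeta law of parameter s. Then the probability that X and Y are coprime, i.e., gcd(X, Y) = 1, equals 1/ζ(2s). -/

import Mathlib

open MeasureTheory ProbabilityTheory ENNReal

/-- The sum `ζ(s) = ∑_{n ≥ 1} n ^ (-s)` (the `n = 0` term vanishes since `0 ^ (-s) = 0`). -/
noncomputable def zetaSum (s : ℝ) : ℝ := ∑' n : ℕ, (n : ℝ) ^ (-s)

/-- The Zeta law of parameter `s`: the probability measure on the positive integers
assigning mass `n ^ (-s) / ζ(s)` to each `n ≥ 1`. -/
noncomputable def zetaMeasure (s : ℝ) : Measure ℕ :=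
  Measure.count.withDensity fun n => ENNReal.ofReal ((n : ℝ) ^ (-s) / zetaSum s)

lemma zsummable {t : ℝ} (ht : 1 < t) : Summable fun n : ℕ => (n : ℝ) ^ (-t) :=
  Real.summable_nat_rpow.2 (by linarith)

lemma ofReal_zetaSum {t : ℝ} (ht : 1 < t) :
    (∑' n : ℕ, ENNReal.ofReal ((n : ℝ) ^ (-t))) = ENNReal.ofReal (zetaSum t) :=
  (ENNReal.ofReal_tsum_of_nonneg (fun n => Real.rpow_nonneg n.cast_nonneg _) (zsummable ht)).symm

lemma coprime_tsum_key {t : ℝ} (ht : 1 < t) :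
    ENNReal.ofReal (zetaSum t) ^ 2 =
      ENNReal.ofReal (zetaSum (2 * t)) *
        ∑' q : ℕ × ℕ, ENNReal.ofReal
          (if Nat.gcd q.1 q.2 = 1 then ((q.1 : ℝ) * (q.2 : ℝ)) ^ (-t) else 0) := by
  have htne : -t ≠ 0 := by intro h; nlinarith [neg_eq_zero.1 h]
  set h : ℕ × ℕ → ℝ≥0∞ := fun q => ENNReal.ofReal
      (if Nat.gcd q.1 q.2 = 1 then ((q.1 : ℝ) * (q.2 : ℝ)) ^ (-t) else 0) with hh
  set f : ℕ × ℕ → ℝ≥0∞ := fun q => ENNReal.ofReal (((q.1 : ℝ) * (q.2 : ℝ)) ^ (-t)) with hf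
  set F : ℕ × ℕ × ℕ → ℝ≥0∞ :=
    fun x => ENNReal.ofReal ((x.1 : ℝ) ^ (-(2 * t))) * h x.2 with hF
  -- f q ≠ 0 → positivity facts
  have hfne : ∀ q : ℕ × ℕ, f q ≠ 0 → 0 < q.1 ∧ 0 < q.2 := by
    intro q hq
    rw [hf] at hq; dsimp only at hq
    rw [Ne, ENNReal.ofReal_eq_zero, not_le] at hq
    have hbase : ((q.1 : ℝ) * (q.2 : ℝ)) ≠ 0 := by
      intro h0; rw [h0, Real.zero_rpow htne] at hq; exact lt_irrefl _ hq
    have h1 : (q.1 : ℝ) ≠ 0 := fun h0 => hbase (by rw [h0, zero_mul])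
    have h2 : (q.2 : ℝ) ≠ 0 := fun h0 => hbase (by rw [h0, mul_zero])
    exact ⟨Nat.pos_of_ne_zero (fun h => h1 (by rw [h]; simp)),
      Nat.pos_of_ne_zero (fun h => h2 (by rw [h]; simp))⟩
  set S : Set (ℕ × ℕ × ℕ) :=
    {x | 0 < x.1 ∧ 0 < x.2.1 ∧ 0 < x.2.2 ∧ Nat.gcd x.2.1 x.2.2 = 1} with hS
  have hsupp : Function.support F ⊆ S := by
    intro x hx
    rw [Function.mem_support, hF] at hx; dsimp only at hx
    rcases mul_ne_zero_iff.1 hx with ⟨hx1, hx2⟩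
    have hd : 0 < x.1 := by
      rw [Ne, ENNReal.ofReal_eq_zero, not_le] at hx1
      refine Nat.pos_of_ne_zero fun h0 => ?_
      rw [h0] at hx1; simp [Real.zero_rpow (show -(2*t) ≠ 0 by intro h; nlinarith [neg_eq_zero.1 h])] at hx1
    rw [hh] at hx2; dsimp only at hx2
    by_cases hg : Nat.gcd x.2.1 x.2.2 = 1
    · rw [if_pos hg] at hx2
      have := hfne x.2 (by rw [hf]; exact hx2)
      exact ⟨hd, this.1, this.2, hg⟩
    · rw [if_neg hg] at hx2; simp at hx2
  set e : S → ℕ × ℕ := fun x => (x.1.1 * x.1.2.1, x.1.1 * x.1.2.2) with he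
  have einj : Function.Injective e := by
    rintro ⟨⟨d, m, n⟩, hd, hm, hn, hg⟩ ⟨⟨d', m', n'⟩, hd', hm', hn', hg'⟩ hxy
    rw [he, Prod.mk.injEq] at hxy
    obtain ⟨h1, h2⟩ := hxy
    have hdd : d = d' := by
      have e1 : Nat.gcd (d * m) (d * n) = d := by rw [Nat.gcd_mul_left, hg, mul_one]
      have e2 : Nat.gcd (d' * m') (d' * n') = d' := by rw [Nat.gcd_mul_left, hg', mul_one]
      rw [← e1, ← e2, h1, h2]
    subst hdd
    have hm2 : m = m' := Nat.eq_of_mul_eq_mul_left hd h1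
    have hn2 : n = n' := Nat.eq_of_mul_eq_mul_left hd h2
    simp [hm2, hn2]
  have evanish : ∀ q, q ∉ Set.range e → f q = 0 := by
    intro q hq
    by_contra hne
    obtain ⟨h1, h2⟩ := hfne q hne
    have hgpos : 0 < Nat.gcd q.1 q.2 := Nat.gcd_pos_of_pos_left _ h1
    refine hq ⟨⟨(Nat.gcd q.1 q.2, q.1 / Nat.gcd q.1 q.2, q.2 / Nat.gcd q.1 q.2),
      hgpos, Nat.div_pos (Nat.le_of_dvd h1 (Nat.gcd_dvd_left _ _)) hgpos,
      Nat.div_pos (Nat.le_of_dvd h2 (Nat.gcd_dvd_right _ _)) hgpos,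
      Nat.coprime_div_gcd_div_gcd hgpos⟩, ?_⟩
    rw [he]
    dsimp only
    rw [Nat.mul_div_cancel' (Nat.gcd_dvd_left _ _), Nat.mul_div_cancel' (Nat.gcd_dvd_right _ _)]
  have hpoint : ∀ x : S, f (e x) = F x.val := by
    rintro ⟨⟨d, m, n⟩, hd, hm, hn, hg⟩
    rw [he, hf, hF, hh]
    dsimp only
    rw [if_pos hg, ← ENNReal.ofReal_mul (Real.rpow_nonneg (by positivity) _)]
    congr 1
    push_cast
    have hdr : (0:ℝ) < (d:ℝ) := by exact_mod_cast hd
    have e1 : ((d:ℝ) * m * ((d:ℝ) * n)) = ((d:ℝ) * d) * ((m:ℝ) * n) := by ring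
    rw [e1, Real.mul_rpow (by positivity) (by positivity)]
    congr 1
    rw [show -(2*t) = -t + -t by ring, Real.rpow_add hdr, ← Real.mul_rpow hdr.le hdr.le]
  have l3 : (∑' x : ℕ × ℕ × ℕ, F x) = ∑' q, f q := by
    have h1 : (∑' x : S, F x.val) = ∑' x, F x :=
      ((hasSum_subtype_iff_of_support_subset hsupp).2 ENNReal.summable.hasSum).tsum_eq
    have h2 : (∑' x : S, f (e x)) = ∑' q, f q :=
      ((einj.hasSum_iff evanish).2 ENNReal.summable.hasSum).tsum_eq
    rw [← h1, ← h2]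
    exact tsum_congr fun x => (hpoint x).symm
  have l1 : (∑' q : ℕ × ℕ, f q) = ENNReal.ofReal (zetaSum t) ^ 2 := by
    rw [ENNReal.tsum_prod']
    have hsplit : ∀ m n : ℕ, f (m, n)
        = ENNReal.ofReal ((m:ℝ)^(-t)) * ENNReal.ofReal ((n:ℝ)^(-t)) := fun m n => by
      rw [hf]; dsimp only
      rw [Real.mul_rpow m.cast_nonneg n.cast_nonneg,
        ENNReal.ofReal_mul (Real.rpow_nonneg m.cast_nonneg _)]
    simp only [hsplit, ENNReal.tsum_mul_left, ENNReal.tsum_mul_right]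
    rw [ofReal_zetaSum ht, sq]
  have l2 : (∑' x : ℕ × ℕ × ℕ, F x)
      = ENNReal.ofReal (zetaSum (2 * t)) * ∑' q, h q := by
    rw [ENNReal.tsum_prod']
    simp only [hF, ENNReal.tsum_mul_left, ENNReal.tsum_mul_right]
    rw [ofReal_zetaSum (by linarith : (1:ℝ) < 2 * t)]
  rw [← l1, ← l3]
  exact l2

lemma zetaSum_pos {t : ℝ} (ht : 1 < t) : 0 < zetaSum t :=
  Summable.tsum_pos (zsummable ht) (fun n => Real.rpow_nonneg n.cast_nonneg _) 1 (by simp)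

lemma zetaMeasure_apply (t : ℝ) (A : Set ℕ) :
    zetaMeasure t A
      = ∑' n : ℕ, A.indicator (fun n => ENNReal.ofReal ((n : ℝ) ^ (-t) / zetaSum t)) n := by
  rw [zetaMeasure, withDensity_apply _ (A.to_countable.measurableSet),
    ← lintegral_indicator (A.to_countable.measurableSet), lintegral_count]

lemma lintegral_zetaMeasure (t : ℝ) (g : ℕ → ℝ≥0∞) :
    ∫⁻ n, g n ∂(zetaMeasure t)
      = ∑' n : ℕ, ENNReal.ofReal ((n : ℝ) ^ (-t) / zetaSum t) * g n := by
  rw [zetaMeasure, lintegral_withDensity_eq_lintegral_mul _ (measurable_of_countable _)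
    (measurable_of_countable _), lintegral_count]
  rfl

/-- If `X` and `Y` are independent random variables, each following the Zeta law of
parameter `s > 1`, then the probability that `X` and `Y` are coprime equals `1 / ζ(2s)`. -/
theorem zeta_coprime_probability {Ω : Type*} [MeasurableSpace Ω] (μ : Measure Ω)
    [IsProbabilityMeasure μ] (s : ℝ) (hs : 1 < s) (X Y : Ω → ℕ)
    (hX : Measurable X) (hY : Measurable Y) (hXY : IndepFun X Y μ)
    (hlX : μ.map X = zetaMeasure s) (hlY : μ.map Y = zetaMeasure s) :
    μ {ω | Nat.gcd (X ω) (Y ω) = 1} = ENNReal.ofReal (1 / zetaSum (2 * s)) := by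
  classical
  have hζ := zetaSum_pos hs
  have hζ2 := zetaSum_pos (show (1:ℝ) < 2 * s by linarith)
  have hprob : IsProbabilityMeasure (zetaMeasure s) := by
    rw [← hlX]; exact Measure.isProbabilityMeasure_map hX.aemeasurable
  have hS : MeasurableSet {q : ℕ × ℕ | Nat.gcd q.1 q.2 = 1} :=
    (Set.to_countable _).measurableSet
  have hmap : μ.map (fun ω => (X ω, Y ω)) = (zetaMeasure s).prod (zetaMeasure s) := by
    have := (indepFun_iff_map_prod_eq_prod_map_map hX.aemeasurable hY.aemeasurable).1 hXY
    rw [hlX, hlY] at this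
    exact this
  have h1 : μ {ω | Nat.gcd (X ω) (Y ω) = 1}
      = (zetaMeasure s).prod (zetaMeasure s) {q : ℕ × ℕ | Nat.gcd q.1 q.2 = 1} := by
    rw [← hmap, Measure.map_apply (hX.prodMk hY) hS]
    rfl
  set p : ℕ → ℝ≥0∞ := fun n => ENNReal.ofReal ((n : ℝ) ^ (-s) / zetaSum s) with hp
  set K : ℕ × ℕ → ℝ≥0∞ := fun q =>
    ENNReal.ofReal (if Nat.gcd q.1 q.2 = 1 then ((q.1 : ℝ) * (q.2 : ℝ)) ^ (-s) else 0) with hK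
  have hterm : ∀ m n : ℕ,
      p m * ((Prod.mk m ⁻¹' {q : ℕ × ℕ | Nat.gcd q.1 q.2 = 1}).indicator p n)
        = ENNReal.ofReal ((zetaSum s)⁻¹) ^ 2 * K (m, n) := by
    intro m n
    rw [Set.indicator_apply, hK]
    simp only [Set.mem_preimage, Set.mem_setOf_eq]
    by_cases hg : Nat.gcd m n = 1
    · rw [if_pos hg, if_pos hg, hp]
      dsimp only
      rw [sq, ← ENNReal.ofReal_mul (inv_nonneg.2 hζ.le),
        ← ENNReal.ofReal_mul (by positivity),
        ← ENNReal.ofReal_mul (by positivity)]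
      congr 1
      rw [Real.mul_rpow m.cast_nonneg n.cast_nonneg]
      field_simp
    · rw [if_neg hg, if_neg hg]
      simp
  rw [h1, Measure.prod_apply hS]
  rw [lintegral_zetaMeasure]
  have hinner : ∀ m : ℕ, zetaMeasure s (Prod.mk m ⁻¹' {q : ℕ × ℕ | Nat.gcd q.1 q.2 = 1})
      = ∑' n : ℕ, (Prod.mk m ⁻¹' {q : ℕ × ℕ | Nat.gcd q.1 q.2 = 1}).indicator p n :=
    fun m => zetaMeasure_apply s _
  simp only [hinner, ← hp]
  simp only [show ∀ n : ℕ, ENNReal.ofReal ((n : ℝ) ^ (-s) / zetaSum s) = p n from fun n => rfl]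
  simp only [← ENNReal.tsum_mul_left, hterm]
  rw [← ENNReal.tsum_prod' (f := fun q : ℕ × ℕ => ENNReal.ofReal ((zetaSum s)⁻¹) ^ 2 * K q),
    ENNReal.tsum_mul_left]
  -- now use the key identity
  have key := coprime_tsum_key hs
  have hne2 : ENNReal.ofReal (zetaSum (2 * s)) ≠ 0 := by
    simp only [Ne, ENNReal.ofReal_eq_zero, not_le]; exact hζ2
  have hGequ : (∑' q : ℕ × ℕ, K q)
      = (ENNReal.ofReal (zetaSum (2 * s)))⁻¹ * ENNReal.ofReal (zetaSum s) ^ 2 := by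
    calc (∑' q : ℕ × ℕ, K q)
        = (ENNReal.ofReal (zetaSum (2 * s)))⁻¹
            * (ENNReal.ofReal (zetaSum (2 * s)) * ∑' q : ℕ × ℕ, K q) := by
          rw [← mul_assoc, ENNReal.inv_mul_cancel hne2 ENNReal.ofReal_ne_top, one_mul]
      _ = (ENNReal.ofReal (zetaSum (2 * s)))⁻¹ * ENNReal.ofReal (zetaSum s) ^ 2 := by
          rw [← key]
  rw [hGequ, show ENNReal.ofReal ((zetaSum s)⁻¹) ^ 2 *
      ((ENNReal.ofReal (zetaSum (2 * s)))⁻¹ * ENNReal.ofReal (zetaSum s) ^ 2)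
      = (ENNReal.ofReal ((zetaSum s)⁻¹) * ENNReal.ofReal (zetaSum s)) ^ 2
          * (ENNReal.ofReal (zetaSum (2 * s)))⁻¹ by ring,
    ← ENNReal.ofReal_mul (inv_nonneg.2 hζ.le), inv_mul_cancel₀ hζ.ne',
    ENNReal.ofReal_one, one_pow, one_mul, ← ENNReal.ofReal_inv_of_pos hζ2, one_div]
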